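/- Let X be a simplicial set in which every edge is invertible, let n ≥ 1 and 0 ≤ k ≤ n, and let Z be the pushout of the map b(Λ[n,k]) → b(Δ[n]) along any map b(Λ[n,k]) → X. Then every edge of Z is invertible. -/

import Mathlib

open CategoryTheory Simplicial CategoryTheory.Limits Opposite

namespace IndexedPaper
/-- The chaotic preorder on two objects. -/
inductive TwoObj : Type where
  | zero
  | one

instance : Preorder TwoObj where
  le _ _ := True
  le_refl _ := trivial
  le_trans _ _ _ _ _ := trivial

/-- `bΔ[1]`, the nerve of the groupoid with two objects and exactly one morphism
between every ordered pair of objects. -/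
def bDelta1 : SSet := CategoryTheory.nerve TwoObj

/-- `δ : Δ[1] ⟶ bΔ[1]`, classifying the morphism from the first object to the second. -/
noncomputable def deltaB : Δ[1] ⟶ bDelta1 :=
  ((@SSet.yonedaEquiv bDelta1 ⦋1⦌)).symm
    (CategoryTheory.ComposableArrows.mk₁ (homOfLE trivial : TwoObj.zero ⟶ TwoObj.one))

/-- An edge `x : Δ[1] ⟶ X` is invertible if it extends along `δ` to `bΔ[1]`. -/
def IsInvertibleEdge {X : SSet} (x : Δ[1] ⟶ X) : Prop :=
  ∃ y : bDelta1 ⟶ X, deltaB ≫ y = x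

/-- A Kan complex: every horn (`n ≥ 1`, `0 ≤ k ≤ n`) has a filler. -/
def IsKanComplex (K : SSet) : Prop :=
  ∀ ⦃n : ℕ⦄, 1 ≤ n → ∀ (k : Fin (n + 1)) (f : (Λ[n, k] : SSet) ⟶ K),
    ∃ g : Δ[n] ⟶ K, (SSet.horn n k).ι ≫ g = f

/-- A Kan fibration: right lifting property with respect to all horn inclusions
(`n ≥ 1`, `0 ≤ k ≤ n`). -/
def IsKanFibration {X Y : SSet} (p : X ⟶ Y) : Prop :=
  ∀ ⦃n : ℕ⦄, 1 ≤ n → ∀ (k : Fin (n + 1)), HasLiftingProperty ((SSet.horn n k).ι) p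

/-! ### Yoneda naturality lemmas -/

lemma yE_comp {X Y : SSet} (f : X ⟶ Y) {n : SimplexCategory}
    (g : SSet.stdSimplex.obj n ⟶ X) :
    (@SSet.yonedaEquiv Y n) (g ≫ f) = f.app (op n) ((@SSet.yonedaEquiv X n) g) := rfl

lemma yE_symm_comp {X Y : SSet} (f : X ⟶ Y) {n : SimplexCategory} (x : X.obj (op n)) :
    ((@SSet.yonedaEquiv Y n)).symm (f.app (op n) x) = ((@SSet.yonedaEquiv X n)).symm x ≫ f := by
  apply ((@SSet.yonedaEquiv Y n)).injective
  rw [Equiv.apply_symm_apply, yE_comp, Equiv.apply_symm_apply]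

lemma yE_symm_map {X : SSet} {m n : SimplexCategory} (f : m ⟶ n) (x : X.obj (op n)) :
    ((@SSet.yonedaEquiv X m)).symm (X.map f.op x) =
      SSet.stdSimplex.map f ≫ ((@SSet.yonedaEquiv X n)).symm x := by
  exact (SSet.yonedaEquiv_symm_naturality_left f x).symm

/-! ### The functor `G` -/

/-- The set of simplices of `X` all of whose edges are invertible. -/
def GSet (X : SSet) (n : SimplexCategoryᵒᵖ) : Set (X.obj n) :=
  {x | ∀ e : Δ[1] ⟶ SSet.stdSimplex.obj n.unop,
    IsInvertibleEdge (e ≫ ((@SSet.yonedaEquiv X n.unop)).symm x)}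

/-- `G X`, the simplicial subset of `X` consisting of the simplices all of whose
edges are invertible. -/
def GObj (X : SSet) : SSet where
  obj n := GSet X n
  map := fun {n m} f => TypeCat.ofHom fun x => ⟨X.map f x.1, by
    intro e
    have h := x.2 (e ≫ SSet.stdSimplex.map f.unop)
    have heq : ((@SSet.yonedaEquiv X m.unop)).symm (X.map f x.1) =
        SSet.stdSimplex.map f.unop ≫ ((@SSet.yonedaEquiv X n.unop)).symm x.1 :=
      yE_symm_map f.unop x.1
    rw [heq, ← Category.assoc]
    exact h⟩
  map_id n := by
    ext x
    exact FunctorToTypes.map_id_apply X x.1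
  map_comp f g := by
    ext x
    exact FunctorToTypes.map_comp_apply X f g x.1

/-- `ε_X : G X ⟶ X`, the inclusion. -/
def epsilon (X : SSet) : GObj X ⟶ X where
  app n := TypeCat.ofHom fun x => x.1
  naturality _ _ _ := rfl

/-- The functorial action of `G` on a map of simplicial sets. -/
def Gmap {X Y : SSet} (f : X ⟶ Y) : GObj X ⟶ GObj Y where
  app n := TypeCat.ofHom fun x => ⟨f.app n x.1, by
    intro e
    obtain ⟨y, hy⟩ := x.2 e
    refine ⟨y ≫ f, ?_⟩
    have : ((@SSet.yonedaEquiv Y n.unop)).symm (f.app n x.1) =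
        ((@SSet.yonedaEquiv X n.unop)).symm x.1 ≫ f := yE_symm_comp f x.1
    simp only [this, ← Category.assoc, hy]⟩
  naturality n m g := by
    ext x
    apply Subtype.ext
    exact FunctorToTypes.naturality f g x.1


/-! ### Homotopy category -/


structure HoObj (X : SSet.{0}) where
  pt : X _⦋0⦌

def edgeSrc {X : SSet.{0}} (e : X _⦋1⦌) : X _⦋0⦌ := X.map (SimplexCategory.δ (1 : Fin 2)).op e

def edgeTgt {X : SSet.{0}} (e : X _⦋1⦌) : X _⦋0⦌ := X.map (SimplexCategory.δ (0 : Fin 2)).op e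

instance hoQuiver (X : SSet.{0}) : Quiver (HoObj X) where
  Hom a b := {e : X _⦋1⦌ // edgeSrc e = a.pt ∧ edgeTgt e = b.pt}

inductive HoRel (X : SSet.{0}) : ∀ ⦃a b : Paths (HoObj X)⦄, (a ⟶ b) → (a ⟶ b) → Prop where
  | comp (σ : X _⦋2⦌) {a b c : HoObj X} (f : a ⟶ b) (g : b ⟶ c) (h : a ⟶ c)
      (hf : f.1 = X.map (SimplexCategory.δ (2 : Fin 3)).op σ)
      (hg : g.1 = X.map (SimplexCategory.δ (0 : Fin 3)).op σ)
      (hh : h.1 = X.map (SimplexCategory.δ (1 : Fin 3)).op σ) :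
      HoRel X (f.toPath ≫ g.toPath) h.toPath
| id {a : HoObj X} (f : a ⟶ a)
      (hf : f.1 = X.map (SimplexCategory.σ (0 : Fin 1)).op a.pt) :
      HoRel X f.toPath (𝟙 ((Paths.of _).obj a))

instance (X : SSet.{0}) : Category (CategoryTheory.Quotient (HoRel X)) :=
  CategoryTheory.Quotient.category _

abbrev HoCat (X : SSet.{0}) := CategoryTheory.Quotient (HoRel X)

/-- The prefunctor on vertices and edges induced by a simplicial map. -/
def hoPre {X Y : SSet.{0}} (f : X ⟶ Y) : HoObj X ⥤q HoObj Y where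
  obj a := ⟨f.app _ a.pt⟩
  map {a b} e := ⟨f.app _ e.1, by
    constructor
    · show Y.map _ _ = _
      rw [← FunctorToTypes.naturality]
      exact congrArg (f.app _) e.2.1
    · show Y.map _ _ = _
      rw [← FunctorToTypes.naturality]
      exact congrArg (f.app _) e.2.2⟩

/-- Lift to the path category. -/
def hoLift {X Y : SSet.{0}} (f : X ⟶ Y) : Paths (HoObj X) ⥤ HoCat Y :=
  Paths.lift ((hoPre f).comp ((Paths.of _).comp (Quotient.functor (HoRel Y)).toPrefunctor))

lemma hoLift_toPath {X Y : SSet.{0}} (f : X ⟶ Y) {a b : HoObj X} (e : a ⟶ b) :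
    (hoLift f).map e.toPath =
      (Quotient.functor (HoRel Y)).map ((hoPre f).map e).toPath :=
  Paths.lift_toPath _ _

/-- The induced functor on homotopy categories. -/
def hoMap {X Y : SSet.{0}} (f : X ⟶ Y) : HoCat X ⥤ HoCat Y :=
  CategoryTheory.Quotient.lift (HoRel X) (hoLift f) (by
    intro a b g₁ g₂ h
    induction h with
    | comp σ p q r hp hq hr =>
      erw [Functor.map_comp, hoLift_toPath, hoLift_toPath, hoLift_toPath,
        ← Functor.map_comp]
      apply CategoryTheory.Quotient.sound _
      apply HoRel.comp (f.app _ σ)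
      · show f.app _ p.1 = _
        rw [hp]; exact FunctorToTypes.naturality f _ σ
      · show f.app _ q.1 = _
        rw [hq]; exact FunctorToTypes.naturality f _ σ
      · show f.app _ r.1 = _
        rw [hr]; exact FunctorToTypes.naturality f _ σ
    | id p hp =>
      have h1 : (Quotient.functor (HoRel Y)).map ((hoPre f).map p).toPath =
          (Quotient.functor (HoRel Y)).map (𝟙 ((Paths.of _).obj ((hoPre f).obj _))) := by
        apply CategoryTheory.Quotient.sound
        apply HoRel.id
        show f.app _ p.1 = _
        rw [hp]; exact FunctorToTypes.naturality f _ _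
      rw [hoLift_toPath, h1, CategoryTheory.Functor.map_id]
      exact ((hoLift f).map_id _).symm)



noncomputable instance : MonoidalClosed SSet.{0} :=
  inferInstanceAs (MonoidalClosed (SimplexCategoryᵒᵖ ⥤ Type 0))

/-- A map `f : A ⟶ B` of simplicial sets is a categorical equivalence if, for every
quasicategory `Q`, the induced functor `ho(Q^B) ⥤ ho(Q^A)` is an equivalence of categories. -/
def IsCatEquiv {A B : SSet.{0}} (f : A ⟶ B) : Prop :=
  ∀ (Q : SSet.{0}), SSet.Quasicategory Q →
    (hoMap ((MonoidalClosed.pre f).app Q)).IsEquivalence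

/-- A categorical fibration (isofibration): right lifting property with respect to
monomorphisms that are categorical equivalences. -/
def IsCatFibration {X Y : SSet.{0}} (p : X ⟶ Y) : Prop :=
  ∀ ⦃A B : SSet.{0}⦄ (i : A ⟶ B), Mono i → IsCatEquiv i → HasLiftingProperty i p


/-! ### b construction -/


instance horn_mono (n : ℕ) (k : Fin (n+1)) : Mono ((SSet.horn n k).ι) := by
  have : ∀ m, Mono (((SSet.horn n k).ι).app m) := by
    intro m
    rw [CategoryTheory.mono_iff_injective]
    exact fun a b h => Subtype.ext h
  exact NatTrans.mono_of_mono_app _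

/-- A degenerate edge. -/
def IsDegenEdge (X : SSet.{0}) (e : X.obj (op ⦋1⦌)) : Prop :=
  ∃ v : X.obj (op ⦋0⦌), e = X.map (SimplexCategory.σ (0 : Fin 1)).op v

/-- The type of nondegenerate edges of `X`. -/
def NdEdge (X : SSet.{0}) : Type := {e : X.obj (op ⦋1⦌) // ¬ IsDegenEdge X e}

lemma mono_ndEdge {X Y : SSet.{0}} (f : X ⟶ Y) [Mono f] {e : X.obj (op ⦋1⦌)}
    (he : ¬ IsDegenEdge X e) : ¬ IsDegenEdge Y (f.app _ e) := by
  rintro ⟨v, hv⟩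
  apply he
  refine ⟨X.map (SimplexCategory.δ (0 : Fin 2)).op e, ?_⟩
  have hinj : Function.Injective (f.app (op ⦋1⦌)) := by
    rw [← CategoryTheory.mono_iff_injective]
    infer_instance
  have hds : SimplexCategory.δ (0 : Fin 2) ≫ SimplexCategory.σ (0 : Fin 1) = 𝟙 (⦋0⦌ : SimplexCategory) :=
    SimplexCategory.δ_comp_σ_self' (by rfl)
  have hv2 : v = Y.map (SimplexCategory.δ (0 : Fin 2)).op (f.app _ e) := by
    rw [hv, ← FunctorToTypes.map_comp_apply, ← op_comp, hds, op_id,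
      FunctorToTypes.map_id_apply]
  have key : f.app _ (X.map (SimplexCategory.σ (0 : Fin 1)).op
      (X.map (SimplexCategory.δ (0 : Fin 2)).op e)) = f.app _ e := by
    rw [FunctorToTypes.naturality, FunctorToTypes.naturality, ← hv2, ← hv]
  exact (hinj key).symm



/-- The canonical map `∐_S Δ[1] ⟶ X` indexed by nondegenerate edges. -/
noncomputable def ndToX (X : SSet.{0}) : (∐ fun _ : NdEdge X => Δ[1]) ⟶ X :=
  Sigma.desc fun s => ((@SSet.yonedaEquiv X ⦋1⦌)).symm s.1

/-- The coproduct of copies of `δ : Δ[1] ⟶ bΔ[1]`. -/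
noncomputable def ndToB (X : SSet.{0}) :
    (∐ fun _ : NdEdge X => Δ[1]) ⟶ (∐ fun _ : NdEdge X => bDelta1) :=
  Limits.Sigma.map fun _ => deltaB

/-- `b X`: the pushout of `∐_S Δ[1] ⟶ X` along `∐_S δ`. -/
noncomputable def bObj (X : SSet.{0}) : SSet := pushout (ndToX X) (ndToB X)

/-- The canonical map `X ⟶ b X`. -/
noncomputable def bUnit (X : SSet.{0}) : X ⟶ bObj X := pushout.inl _ _

/-- The map `b X ⟶ b Y` induced by a monomorphism `X ⟶ Y`. -/
noncomputable def bMap {X Y : SSet.{0}} (f : X ⟶ Y) [Mono f] : bObj X ⟶ bObj Y :=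
  pushout.map (ndToX X) (ndToB X) (ndToX Y) (ndToB Y) f
    (Sigma.desc fun s => Sigma.ι (fun _ : NdEdge Y => bDelta1)
      (⟨f.app _ s.1, mono_ndEdge f s.2⟩ : NdEdge Y))
    (Sigma.desc fun s => Sigma.ι (fun _ : NdEdge Y => Δ[1])
      (⟨f.app _ s.1, mono_ndEdge f s.2⟩ : NdEdge Y))
    (by
      apply Sigma.hom_ext
      intro s
      simp only [ndToX, colimit.ι_desc_assoc, Cofan.mk_ι_app, colimit.ι_desc]
      exact (yE_symm_comp f s.1).symm)
    (by
      apply Sigma.hom_ext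
      intro s
      simp [ndToB, ndToX, Limits.Sigma.map, ι_colimMap])


lemma bUnit_naturality {X Y : SSet.{0}} (f : X ⟶ Y) [Mono f] :
    bUnit X ≫ bMap f = f ≫ bUnit Y := by
  simp only [bUnit, bMap, pushout.map]
  exact pushout.inl_desc _ _ _


/-! ### Auxiliary lemmas for Statement 8 -/

lemma isInvertibleEdge_comp {X Y : SSet} {x : Δ[1] ⟶ X} (h : IsInvertibleEdge x) (f : X ⟶ Y) :
    IsInvertibleEdge (x ≫ f) := by
  obtain ⟨y, hy⟩ := h
  exact ⟨y ≫ f, by rw [← Category.assoc, hy]⟩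

/-- Post-composition with a functor induces a map on `bΔ[1]`. -/
def bD1Map (F : TwoObj ⥤ TwoObj) : bDelta1 ⟶ bDelta1 where
  app _ := TypeCat.ofHom fun x => x ⋙ F
  naturality _ _ _ := rfl

lemma edge_bDelta1_invertible (x : Δ[1] ⟶ bDelta1) : IsInvertibleEdge x := by
  set c := (@SSet.yonedaEquiv bDelta1 ⦋1⦌) x with hc
  let F : TwoObj ⥤ TwoObj :=
  { obj := fun a => match a with
      | TwoObj.zero => c.obj 0
      | TwoObj.one => c.obj 1
    map := fun _ => homOfLE trivial
    map_id := fun _ => Subsingleton.elim _ _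
    map_comp := fun _ _ => Subsingleton.elim _ _ }
  refine ⟨bD1Map F, ?_⟩
  apply ((@SSet.yonedaEquiv bDelta1 ⦋1⦌)).injective
  rw [yE_comp]
  have h1 : (@SSet.yonedaEquiv bDelta1 ⦋1⦌) deltaB =
      ComposableArrows.mk₁ (homOfLE trivial : TwoObj.zero ⟶ TwoObj.one) :=
    Equiv.apply_symm_apply _ _
  rw [h1]
  show (ComposableArrows.mk₁ (homOfLE trivial : TwoObj.zero ⟶ TwoObj.one)) ⋙ F = c
  exact ComposableArrows.ext₁ rfl rfl (Subsingleton.elim _ _)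

instance subsingleton_hom_to_zero (m : SimplexCategory) :
    Subsingleton (m ⟶ ⦋0⦌) := by
  constructor
  intro f g
  apply SimplexCategory.Hom.ext
  apply OrderHom.ext
  funext i
  exact @Subsingleton.elim (Fin 1) _ _ _

instance subsingleton_delta0_obj (m : SimplexCategoryᵒᵖ) :
    Subsingleton ((Δ[0] : SSet.{0}).obj m) :=
  inferInstanceAs (Subsingleton (ULift (m.unop ⟶ ⦋0⦌)))

/-- The unique map `bΔ[1] ⟶ Δ[0]`. -/
def bD1ToPt : (bDelta1 : SSet.{0}) ⟶ Δ[0] where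
  app m := TypeCat.ofHom fun _ =>
    (ULift.up (SimplexCategory.Hom.mk (OrderHom.const _ 0)) : ULift (m.unop ⟶ ⦋0⦌))
  naturality _ _ _ := by ext x; exact Subsingleton.elim _ _

lemma degen_edge_invertible {W : SSet.{0}} (v : W.obj (op (⦋0⦌ : SimplexCategory))) :
    IsInvertibleEdge (((@SSet.yonedaEquiv W ⦋1⦌)).symm
      (W.map (SimplexCategory.σ (0 : Fin 1)).op v)) := by
  rw [yE_symm_map]
  refine ⟨bD1ToPt ≫ ((@SSet.yonedaEquiv W ⦋0⦌)).symm v, ?_⟩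
  rw [← Category.assoc]
  congr 1
  ext m x

lemma pushout_obj_surjective {A B C : SSet.{0}} (f : A ⟶ B) (g : A ⟶ C)
    (m : SimplexCategoryᵒᵖ) (z : (pushout f g).obj m) :
    (∃ x, (pushout.inl f g).app m x = z) ∨ (∃ y, (pushout.inr f g).app m y = z) := by
  have hc := isColimitOfPreserves ((evaluation SimplexCategoryᵒᵖ (Type 0)).obj m)
      (colimit.isColimit (span f g))
  obtain ⟨j, y, hy⟩ := Types.jointly_surjective _ hc z
  match j with
  | WalkingSpan.zero =>
    left
    refine ⟨f.app m y, ?_⟩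
    have hw : f ≫ pushout.inl f g = colimit.ι (span f g) WalkingSpan.zero :=
      colimit.w (span f g) WalkingSpan.Hom.fst
    calc (pushout.inl f g).app m (f.app m y)
        = ((f ≫ pushout.inl f g)).app m y := rfl
      _ = (colimit.ι (span f g) WalkingSpan.zero).app m y := by rw [hw]; rfl
      _ = z := hy
  | WalkingSpan.left => exact Or.inl ⟨y, hy⟩
  | WalkingSpan.right => exact Or.inr ⟨y, hy⟩

lemma sigma_obj_surjective {ι' : Type} (F : ι' → SSet.{0}) (m : SimplexCategoryᵒᵖ)
    (z : (∐ F).obj m) : ∃ s x, (Sigma.ι F s).app m x = z := by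
  have hc := isColimitOfPreserves ((evaluation SimplexCategoryᵒᵖ (Type 0)).obj m)
      (colimit.isColimit (Discrete.functor F))
  obtain ⟨⟨s⟩, y, hy⟩ := Types.jointly_surjective _ hc z
  exact ⟨s, y, hy⟩

lemma edge_bObj_invertible (Y : SSet.{0}) (e : Δ[1] ⟶ bObj Y) : IsInvertibleEdge e := by
  have he : e = ((@SSet.yonedaEquiv (bObj Y) ⦋1⦌)).symm ((@SSet.yonedaEquiv (bObj Y) ⦋1⦌) e) :=
    (Equiv.symm_apply_apply _ _).symm
  rcases pushout_obj_surjective (ndToX Y) (ndToB Y) (op ⦋1⦌)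
      ((@SSet.yonedaEquiv (bObj Y) ⦋1⦌) e) with ⟨x, hx⟩ | ⟨y, hy⟩
  · have he2 : e = ((@SSet.yonedaEquiv Y ⦋1⦌)).symm x ≫ pushout.inl (ndToX Y) (ndToB Y) := by
      rw [he, ← hx]; exact yE_symm_comp _ _
    rw [he2]
    by_cases hd : IsDegenEdge Y x
    · obtain ⟨v, hv⟩ := hd
      rw [hv]
      exact isInvertibleEdge_comp (degen_edge_invertible v) _
    · have h0 := pushout.condition (f := ndToX Y) (g := ndToB Y)
      have h1 : Sigma.ι (fun _ : NdEdge Y => Δ[1]) ⟨x, hd⟩ ≫ ndToX Y ≫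
            pushout.inl (ndToX Y) (ndToB Y)
          = Sigma.ι (fun _ : NdEdge Y => Δ[1]) ⟨x, hd⟩ ≫ ndToB Y ≫
            pushout.inr (ndToX Y) (ndToB Y) := by rw [h0]
      have h2 : ((@SSet.yonedaEquiv Y ⦋1⦌)).symm x ≫ pushout.inl (ndToX Y) (ndToB Y)
          = deltaB ≫ Sigma.ι (fun _ : NdEdge Y => bDelta1) ⟨x, hd⟩ ≫
            pushout.inr (ndToX Y) (ndToB Y) := by
        simpa [ndToX, ndToB, Limits.Sigma.map, ι_colimMap_assoc] using h1
      rw [h2]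
      exact ⟨_, rfl⟩
  · obtain ⟨s, x', hx'⟩ := sigma_obj_surjective (fun _ : NdEdge Y => bDelta1) (op ⦋1⦌) y
    have he2 : e = ((@SSet.yonedaEquiv bDelta1 ⦋1⦌)).symm x' ≫
        (Sigma.ι (fun _ : NdEdge Y => bDelta1) s ≫ pushout.inr (ndToX Y) (ndToB Y)) := by
      rw [he, ← hy, ← hx']
      exact (yE_symm_comp _ _).trans ((congrArg (· ≫ _) (yE_symm_comp _ _)).trans (Category.assoc _ _ _))
    rw [he2]
    exact isInvertibleEdge_comp (edge_bDelta1_invertible _) _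

/-- Pushouts of `b(Λ[n,k]) ⟶ b(Δ[n])` preserve the property that every
edge is invertible. -/
theorem pushout_b_horn_preserves_invertible_edges {X : SSet.{0}}
    (hX : ∀ e : Δ[1] ⟶ X, IsInvertibleEdge e) (n : ℕ) (hn : 1 ≤ n) (k : Fin (n + 1))
    (u : bObj (SSet.horn n k : SSet) ⟶ X)
    (e : Δ[1] ⟶ pushout (bMap ((SSet.horn n k).ι)) u) :
    IsInvertibleEdge e := by
  have he : e = ((@SSet.yonedaEquiv _ ⦋1⦌)).symm ((@SSet.yonedaEquiv _ ⦋1⦌) e) :=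
    (Equiv.symm_apply_apply _ _).symm
  rcases pushout_obj_surjective (bMap ((SSet.horn n k).ι)) u (op ⦋1⦌) ((@SSet.yonedaEquiv _ ⦋1⦌) e) with ⟨x, hx⟩ | ⟨y, hy⟩
  · have he2 : e = ((@SSet.yonedaEquiv _ ⦋1⦌)).symm x ≫ pushout.inl (bMap ((SSet.horn n k).ι)) u := by
      rw [he, ← hx, yE_symm_comp]
    rw [he2]
    exact isInvertibleEdge_comp (edge_bObj_invertible _ _) _
  · have he2 : e = ((@SSet.yonedaEquiv X ⦋1⦌)).symm y ≫ pushout.inr (bMap ((SSet.horn n k).ι)) u := by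
      rw [he, ← hy, yE_symm_comp]
    rw [he2]
    exact isInvertibleEdge_comp (hX _) _


end IndexedPaper
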